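/- Let V be a finite-dimensional ℤ₂-graded complex vector space with a consistent, super Hermitian symmetric, super positive sesquilinear form B, and let S be a set of linear operators on V, each homogeneous and B-super-skew-adjoint. Then V is completely reducible: there exists a finite family W₁, …, W_r of nonzero graded subspaces of V, each invariant under every A ∈ S and containing no graded S-invariant subspace other than 0 and itself, such that V is the internal direct sum of W₁, …, W_r. (Paper's Proposition 2.2: every finite-dimensional unitary representation of a complex Lie superalgebra or Lie supergroup is completely reducible.) -/

import Mathlib

/-- paper's Proposition 2.2.
Let `V` be a finite-dimensional ℤ₂-graded complex vector space with a consistent,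
super Hermitian symmetric, super positive sesquilinear form `B`, and `S` a set of
linear operators on `V`, each homogeneous and `B`-super-skew-adjoint.  Then `V` is
completely reducible: it is the internal direct sum of finitely many nonzero graded
`S`-invariant subspaces each of which contains no graded `S`-invariant subspace
other than `0` and itself. -/

private theorem aux_indep_cons {R M : Type*} [Ring R] [AddCommGroup M] [Module R M]
    {r : ℕ} {U W' : Submodule R M} {f : Fin r → Submodule R M}
    (hf : iSupIndep f) (hfle : ∀ i, f i ≤ W') (hdisj : ∀ x ∈ U, x ∈ W' → x = 0) :
    iSupIndep (Fin.cons U f) := by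
  rw [iSupIndep_def]
  intro i
  refine Fin.cases ?_ ?_ i
  · have hle : (⨆ j, ⨆ _ : j ≠ (0 : Fin (r+1)), Fin.cons U f j) ≤ W' := by
      refine iSup_le fun j => ?_
      refine Fin.cases ?_ ?_ j
      · exact iSup_le fun hj => absurd rfl hj
      · intro m
        refine iSup_le fun _ => ?_
        rw [Fin.cons_succ]
        exact hfle m
    rw [Fin.cons_zero, Submodule.disjoint_def]
    intro x hxU hxsup
    exact hdisj x hxU (hle hxsup)
  · intro k
    rw [Fin.cons_succ, Submodule.disjoint_def]
    intro x hxk hxsup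
    have hle : (⨆ j, ⨆ _ : j ≠ Fin.succ k, Fin.cons U f j)
        ≤ U ⊔ (⨆ m, ⨆ _ : m ≠ k, f m) := by
      refine iSup_le fun j => ?_
      refine Fin.cases ?_ ?_ j
      · refine iSup_le fun _ => ?_
        rw [Fin.cons_zero]
        exact le_sup_left
      · intro m
        refine iSup_le fun hm' => ?_
        have hm : m ≠ k := fun hmk => hm' (by rw [hmk])
        rw [Fin.cons_succ]
        exact le_trans (le_iSup₂ (f := fun m (_ : m ≠ k) => f m) m hm) le_sup_right
    obtain ⟨u, hu, y, hy, hxy⟩ := Submodule.mem_sup.mp (hle hxsup)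
    have hXle : (⨆ m, ⨆ _ : m ≠ k, f m) ≤ W' := iSup_le fun m => iSup_le fun _ => hfle m
    have huW' : u ∈ W' := by
      have hxW' : x ∈ W' := hfle k hxk
      have hyW' : y ∈ W' := hXle hy
      have hu' : u = x - y := by rw [← hxy]; abel
      rw [hu']; exact sub_mem hxW' hyW'
    have hu0 : u = 0 := hdisj u hu huW'
    have hxy' : x = y := by rw [← hxy, hu0, zero_add]
    have hd := (iSupIndep_def.mp hf k)
    rw [Submodule.disjoint_def] at hd
    exact hd x hxk (hxy' ▸ hy)

theorem stmt_4
    (V : Type*) [AddCommGroup V] [Module ℂ V] [FiniteDimensional ℂ V]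
    (V0 V1 : Submodule ℂ V) (hcompl : IsCompl V0 V1)
    (B : V → V → ℂ)
    -- `B` is ℂ-linear in the first argument
    (hB1 : ∀ (a : ℂ) (u u' v : V), B (a • u + u') v = a * B u v + B u' v)
    -- `B` is conjugate-linear in the second argument
    (hB2 : ∀ (a : ℂ) (u v v' : V), B u (a • v + v') = (starRingEnd ℂ) a * B u v + B u v')
    -- `B` is consistent
    (hcons : ∀ u ∈ V0, ∀ v ∈ V1, B u v = 0 ∧ B v u = 0)
    -- `B` is super Hermitian symmetric
    (hsym00 : ∀ u ∈ V0, ∀ v ∈ V0, B u v = (starRingEnd ℂ) (B v u))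
    (hsym01 : ∀ u ∈ V0, ∀ v ∈ V1, B u v = (starRingEnd ℂ) (B v u))
    (hsym10 : ∀ u ∈ V1, ∀ v ∈ V0, B u v = (starRingEnd ℂ) (B v u))
    (hsym11 : ∀ u ∈ V1, ∀ v ∈ V1, B u v = - (starRingEnd ℂ) (B v u))
    -- `B` is super positive
    (hpos0 : ∀ v ∈ V0, v ≠ 0 → ∃ t : ℝ, 0 < t ∧ B v v = (t : ℂ))
    (hpos1 : ∀ v ∈ V1, v ≠ 0 → ∃ t : ℝ, 0 < t ∧ B v v = Complex.I * (t : ℂ))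
    (S : Set (V →ₗ[ℂ] V))
    -- every `A ∈ S` is homogeneous and `B`-super-skew-adjoint
    (hS : ∀ A ∈ S,
      ((∀ v ∈ V0, A v ∈ V0) ∧ (∀ v ∈ V1, A v ∈ V1) ∧
        (∀ v : V, (v ∈ V0 ∨ v ∈ V1) → ∀ w : V, B (A v) w + B v (A w) = 0))
      ∨
      ((∀ v ∈ V0, A v ∈ V1) ∧ (∀ v ∈ V1, A v ∈ V0) ∧
        (∀ v ∈ V0, ∀ w : V, B (A v) w + B v (A w) = 0) ∧
        (∀ v ∈ V1, ∀ w : V, B (A v) w - B v (A w) = 0))) :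
    -- `V` is the internal direct sum of irreducible graded `S`-invariant subspaces
    ∃ (r : ℕ) (W : Fin r → Submodule ℂ V),
      (∀ i : Fin r,
        -- each `W i` is nonzero
        W i ≠ ⊥ ∧
        -- each `W i` is graded
        W i = (W i ⊓ V0) ⊔ (W i ⊓ V1) ∧
        -- each `W i` is `S`-invariant
        (∀ A ∈ S, ∀ w ∈ W i, A w ∈ W i) ∧
        -- each `W i` is irreducible: it contains no graded `S`-invariant
        -- subspace other than `0` and itself
        (∀ U : Submodule ℂ V, U ≤ W i → U = (U ⊓ V0) ⊔ (U ⊓ V1) →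
          (∀ A ∈ S, ∀ w ∈ U, A w ∈ U) → U = ⊥ ∨ U = W i)) ∧
      DirectSum.IsInternal W := by
  classical
  -- the even projection
  set p0 : V → V := fun v => (V0.projectionOnto V1 hcompl v : V) with hp0def
  have hp0mem : ∀ v, p0 v ∈ V0 := fun v => (V0.projectionOnto V1 hcompl v).2
  have hp1mem : ∀ v, v - p0 v ∈ V1 := by
    intro v
    have h := Submodule.projection_add_projection_eq_self hcompl v
    have : v - p0 v = (V1.projectionOnto V0 hcompl.symm v : V) := by
      exact (Submodule.projection_eq_self_sub_projection hcompl v).symm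
    rw [this]
    exact (V1.projectionOnto V0 hcompl.symm v).2
  have hp0V0 : ∀ v ∈ V0, p0 v = v := by
    intro v hv
    simp only [hp0def]
    exact congrArg Subtype.val (Submodule.projectionOnto_apply_left hcompl ⟨v, hv⟩)
  have hp0V1 : ∀ v ∈ V1, p0 v = 0 := by
    intro v hv
    simp only [hp0def]
    rw [Submodule.projectionOnto_apply_of_mem_right hcompl hv]
    rfl
  have hp0add : ∀ x y, p0 (x + y) = p0 x + p0 y := by
    intro x y; simp [hp0def]
  have hp0smul : ∀ (a : ℂ) x, p0 (a • x) = a • p0 x := by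
    intro a x; simp [hp0def]
  have hp0sub : ∀ x y, p0 (x - y) = p0 x - p0 y := by
    intro x y; simp [hp0def]
  have hp0split : ∀ x y, x ∈ V0 → y ∈ V1 → p0 (x + y) = x := by
    intro x y hx hy
    rw [hp0add, hp0V0 x hx, hp0V1 y hy, add_zero]
  have hp0idem : ∀ v, p0 (p0 v) = p0 v := fun v => hp0V0 _ (hp0mem v)
  -- B basics
  have hB0l : ∀ v, B 0 v = 0 := by
    intro v
    have h := hB1 1 0 0 v
    simp only [one_smul, add_zero, one_mul] at h
    linear_combination -h
  have hB0r : ∀ v, B v 0 = 0 := by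
    intro v
    have h := hB2 1 v 0 0
    simp only [one_smul, add_zero, map_one, one_mul] at h
    linear_combination -h
  have hBaddl : ∀ u u' v, B (u + u') v = B u v + B u' v := by
    intro u u' v
    have h := hB1 1 u u' v
    simpa using h
  have hBaddr : ∀ u v v', B u (v + v') = B u v + B u v' := by
    intro u v v'
    have h := hB2 1 u v v'
    simpa using h
  have hBsmull : ∀ (a : ℂ) u v, B (a • u) v = a * B u v := by
    intro a u v
    have h := hB1 a u 0 v
    simpa [hB0l] using h
  have hBsmulr : ∀ (a : ℂ) u v, B u (a • v) = (starRingEnd ℂ) a * B u v := by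
    intro a u v
    have h := hB2 a u v 0
    simpa [hB0r] using h
  have hBsubl : ∀ u u' v, B (u - u') v = B u v - B u' v := by
    intro u u' v
    have h : B (u - u' + u') v = B (u - u') v + B u' v := hBaddl _ _ _
    rw [sub_add_cancel] at h
    linear_combination -h
  have hBsubr : ∀ u v v', B u (v - v') = B u v - B u v' := by
    intro u v v'
    have h : B u (v - v' + v') = B u (v - v') + B u v' := hBaddr _ _ _
    rw [sub_add_cancel] at h
    linear_combination -h
  -- the auxiliary positive definite hermitian form
  set h : V → V → ℂ :=
    fun u v => B (p0 u) (p0 v) - Complex.I * B (u - p0 u) (v - p0 v) with hhdef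
  have hh : ∀ u v, h u v = B (p0 u) (p0 v) - Complex.I * B (u - p0 u) (v - p0 v) :=
    fun u v => rfl
  have hherm : ∀ x y, (starRingEnd ℂ) (h x y) = h y x := by
    intro x y
    have e1 : B (p0 y) (p0 x) = (starRingEnd ℂ) (B (p0 x) (p0 y)) :=
      hsym00 _ (hp0mem y) _ (hp0mem x)
    have e2 : B (y - p0 y) (x - p0 x) = - (starRingEnd ℂ) (B (x - p0 x) (y - p0 y)) :=
      hsym11 _ (hp1mem y) _ (hp1mem x)
    rw [hh, hh, map_sub, map_mul, Complex.conj_I, ← e1]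
    rw [show (starRingEnd ℂ) (B (x - p0 x) (y - p0 y)) = - B (y - p0 y) (x - p0 x) by
      rw [e2]; ring]
    ring
  have hhaddr : ∀ z x y, h z (x + y) = h z x + h z y := by
    intro z x y
    rw [hh, hh, hh, hp0add]
    have e1 : x + y - (p0 x + p0 y) = (x - p0 x) + (y - p0 y) := by abel
    rw [e1, hBaddr, hBaddr]
    ring
  have hhsmulr : ∀ (a : ℂ) x y, h y (a • x) = (starRingEnd ℂ) a * h y x := by
    intro a x y
    rw [hh, hh, hp0smul]
    have e1 : a • x - a • p0 x = a • (x - p0 x) := by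
      rw [smul_sub]
    rw [e1, hBsmulr, hBsmulr]
    ring
  have hpos : ∀ v : V, ∃ t : ℝ, 0 ≤ t ∧ h v v = (t : ℂ) ∧ (t = 0 → v = 0) := by
    intro v
    have hsplit : v = p0 v + (v - p0 v) := by abel
    by_cases h0 : p0 v = 0 <;> by_cases h1 : v - p0 v = 0
    · refine ⟨0, le_refl _, ?_, fun _ => ?_⟩
      · rw [hh, h1, h0, hB0l]
        simp
      · have hv : v = p0 v := sub_eq_zero.mp h1
        rw [hv, h0]
    · obtain ⟨t, ht, hB⟩ := hpos1 _ (hp1mem v) h1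
      refine ⟨t, le_of_lt ht, ?_, fun h' => absurd h' (ne_of_gt ht)⟩
      rw [hh, hB, h0, hB0l]
      rw [show Complex.I * (Complex.I * (t:ℂ)) = -(t:ℂ) by
        rw [← mul_assoc, Complex.I_mul_I]; ring]
      ring
    · obtain ⟨t, ht, hB⟩ := hpos0 _ (hp0mem v) h0
      refine ⟨t, le_of_lt ht, ?_, fun h' => absurd h' (ne_of_gt ht)⟩
      rw [hh, h1, hB0r, hB]
      ring
    · obtain ⟨t0, ht0, hB0⟩ := hpos0 _ (hp0mem v) h0
      obtain ⟨t1, ht1, hB1'⟩ := hpos1 _ (hp1mem v) h1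
      refine ⟨t0 + t1, by positivity, ?_, fun h' => absurd h' (by positivity)⟩
      rw [hh, hB0, hB1']
      push_cast
      rw [show Complex.I * (Complex.I * (t1:ℂ)) = -(t1:ℂ) by
        rw [← mul_assoc, Complex.I_mul_I]; ring]
      ring
  -- turn `h` into an inner product, conjugate-linear in the first slot
  letI core : InnerProductSpace.Core ℂ V :=
    { inner := fun x y => h y x
      conj_inner_symm := fun x y => hherm x y
      re_inner_nonneg := by
        intro x
        obtain ⟨t, ht0, ht, -⟩ := hpos x
        simp only [ht, RCLike.re_to_complex, Complex.ofReal_re]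
        exact ht0
      add_left := fun x y z => hhaddr z x y
      smul_left := fun x y r => hhsmulr r x y
      definite := by
        intro x hx
        obtain ⟨t, _, ht, htz⟩ := hpos x
        apply htz
        have h2 : (t : ℂ) = 0 := ht ▸ hx
        exact_mod_cast h2 }
  letI : NormedAddCommGroup V := core.toNormedAddCommGroup
  letI : InnerProductSpace ℂ V := InnerProductSpace.ofCore core.toCore
  have hinner : ∀ x y : V, inner ℂ x y = h y x := fun _ _ => rfl
  -- adjointness of the operators with respect to h
  have hAdj : ∀ A ∈ S, ∃ c : ℂ, ∀ u v, h (A u) v = c * h u (A v) := by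
    intro A hA
    rcases hS A hA with ⟨hA0, hA1, hskew⟩ | ⟨hA0, hA1, hskew0, hskew1⟩
    · -- even case
      refine ⟨-1, fun u v => ?_⟩
      have hcomm : ∀ w, p0 (A w) = A (p0 w) := by
        intro w
        have e : A w = A (p0 w) + A (w - p0 w) := by rw [← map_add]; congr 1; abel
        rw [e, hp0split _ _ (hA0 _ (hp0mem w)) (hA1 _ (hp1mem w))]
      have hs0 := hskew (p0 u) (Or.inl (hp0mem u)) (p0 v)
      have hs1 := hskew (u - p0 u) (Or.inr (hp1mem u)) (v - p0 v)
      have e0 : p0 (A u) = A (p0 u) := hcomm u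
      have e0' : p0 (A v) = A (p0 v) := hcomm v
      have e1 : A u - A (p0 u) = A (u - p0 u) := (map_sub A u (p0 u)).symm
      have e1' : A v - A (p0 v) = A (v - p0 v) := (map_sub A v (p0 v)).symm
      rw [hh, hh, e0, e0', e1, e1']
      linear_combination hs0 - Complex.I * hs1
    · -- odd case
      refine ⟨Complex.I, fun u v => ?_⟩
      have hcomm : ∀ w, p0 (A w) = A (w - p0 w) := by
        intro w
        have e : A w = A (w - p0 w) + A (p0 w) := by rw [← map_add]; congr 1; abel
        rw [e, hp0split _ _ (hA1 _ (hp1mem w)) (hA0 _ (hp0mem w))]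
      have hs0 := hskew0 (p0 u) (hp0mem u) (v - p0 v)
      have hs1 := hskew1 (u - p0 u) (hp1mem u) (p0 v)
      have e0 : p0 (A u) = A (u - p0 u) := hcomm u
      have e0' : p0 (A v) = A (v - p0 v) := hcomm v
      have e1 : A u - A (u - p0 u) = A (p0 u) := by
        rw [map_sub]; abel
      have e1' : A v - A (v - p0 v) = A (p0 v) := by
        rw [map_sub]; abel
      rw [hh, hh, e0, e0', e1, e1']
      linear_combination hs1 - Complex.I * hs0 + B (u - p0 u) (A (p0 v)) * Complex.I_mul_I
  -- orthogonal complements of invariant graded subspaces are invariant and graded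
  have hOrthInv : ∀ W : Submodule ℂ V, (∀ A ∈ S, ∀ w ∈ W, A w ∈ W) →
      ∀ A ∈ S, ∀ v ∈ Wᗮ, A v ∈ Wᗮ := by
    intro W hW A hA v hv
    obtain ⟨c, hc⟩ := hAdj A hA
    rw [Submodule.mem_orthogonal]
    intro u hu
    rw [hinner, hc]
    have : h v (A u) = 0 := by
      rw [← hinner]
      exact (Submodule.mem_orthogonal W v).mp hv (A u) (hW A hA u hu)
    rw [this, mul_zero]
  have hOrthGr : ∀ W : Submodule ℂ V, (∀ v ∈ W, p0 v ∈ W) →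
      ∀ v ∈ Wᗮ, p0 v ∈ Wᗮ := by
    intro W hW v hv
    rw [Submodule.mem_orthogonal]
    intro u hu
    rw [hinner]
    have key : h (p0 v) u = h v (p0 u) := by
      rw [hh, hh, hp0idem, hp0idem, sub_self, sub_self, hB0l, hB0r]
    rw [key, ← hinner]
    exact (Submodule.mem_orthogonal W v).mp hv (p0 u) (hW u hu)
  -- gradedness in two forms
  have hGrEquiv : ∀ W : Submodule ℂ V,
      (∀ v ∈ W, p0 v ∈ W) ↔ W = (W ⊓ V0) ⊔ (W ⊓ V1) := by
    intro W
    constructor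
    · intro hGr
      refine le_antisymm ?_ (sup_le inf_le_left inf_le_left)
      intro v hv
      have h0 : p0 v ∈ W ⊓ V0 := ⟨hGr v hv, hp0mem v⟩
      have h1 : v - p0 v ∈ W ⊓ V1 := ⟨sub_mem hv (hGr v hv), hp1mem v⟩
      have : v = p0 v + (v - p0 v) := by abel
      rw [this]
      exact Submodule.add_mem_sup h0 h1
    · intro heq v hv
      rw [heq] at hv
      obtain ⟨a, ha, b, hb, hab⟩ := Submodule.mem_sup.mp hv
      have : p0 v = a := by rw [← hab, hp0split a b ha.2 hb.2]
      rw [this, heq]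
      exact Submodule.mem_sup_left ha
  -- the main induction on dimension
  have main : ∀ n : ℕ, ∀ W : Submodule ℂ V, Module.finrank ℂ W ≤ n →
      (∀ v ∈ W, p0 v ∈ W) → (∀ A ∈ S, ∀ w ∈ W, A w ∈ W) →
      ∃ (r : ℕ) (f : Fin r → Submodule ℂ V),
        (∀ i, f i ≠ ⊥ ∧ (∀ v ∈ f i, p0 v ∈ f i) ∧ (∀ A ∈ S, ∀ w ∈ f i, A w ∈ f i) ∧
          (∀ U : Submodule ℂ V, U ≤ f i → (∀ v ∈ U, p0 v ∈ U) →
            (∀ A ∈ S, ∀ w ∈ U, A w ∈ U) → U = ⊥ ∨ U = f i)) ∧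
        iSup f = W ∧ iSupIndep f := by
    intro n
    induction n with
    | zero =>
      intro W hrank hGr hInv
      have hWbot : W = ⊥ := by
        rw [← Submodule.finrank_eq_zero (R := ℂ)]
        omega
      refine ⟨0, fun _ => ⊥, fun i => i.elim0, ?_, fun i => i.elim0⟩
      rw [hWbot]
      exact iSup_of_empty _
    | succ n ih =>
      intro W hrank hGr hInv
      by_cases hWbot : W = ⊥
      · refine ⟨0, fun _ => ⊥, fun i => i.elim0, ?_, fun i => i.elim0⟩
        rw [hWbot]
        exact iSup_of_empty _
      · -- pick a minimal nonzero graded invariant subspace of W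
        set T : Set (Submodule ℂ V) :=
          {U | U ≤ W ∧ U ≠ ⊥ ∧ (∀ v ∈ U, p0 v ∈ U) ∧ (∀ A ∈ S, ∀ w ∈ U, A w ∈ U)} with hT
        have hTne : W ∈ T := ⟨le_refl _, hWbot, hGr, hInv⟩
        set K : Set ℕ := (fun U : Submodule ℂ V => Module.finrank ℂ U) '' T with hK
        have hKne : K.Nonempty := ⟨_, W, hTne, rfl⟩
        obtain ⟨U, hUT, hUrank⟩ := Nat.sInf_mem hKne
        have hUmin : ∀ U' ∈ T, Module.finrank ℂ U ≤ Module.finrank ℂ U' := by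
          intro U' hU'
          have hUrank' : Module.finrank ℂ U = sInf K := hUrank
          rw [hUrank']
          exact Nat.sInf_le ⟨U', hU', rfl⟩
        obtain ⟨hUW, hUne, hUGr, hUInv⟩ := hUT
        have hUIrr : ∀ U' : Submodule ℂ V, U' ≤ U → (∀ v ∈ U', p0 v ∈ U') →
            (∀ A ∈ S, ∀ w ∈ U', A w ∈ U') → U' = ⊥ ∨ U' = U := by
          intro U' hle hGr' hInv'
          by_cases hbot : U' = ⊥
          · exact Or.inl hbot
          · right
            have hU'T : U' ∈ T := ⟨le_trans hle hUW, hbot, hGr', hInv'⟩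
            exact Submodule.eq_of_le_of_finrank_le hle (hUmin U' hU'T)
        -- the complementary invariant graded subspace
        set W' : Submodule ℂ V := Uᗮ ⊓ W with hW'
        have hW'Gr : ∀ v ∈ W', p0 v ∈ W' :=
          fun v hv => ⟨hOrthGr U hUGr v hv.1, hGr v hv.2⟩
        have hW'Inv : ∀ A ∈ S, ∀ w ∈ W', A w ∈ W' :=
          fun A hA w hw => ⟨hOrthInv U hUInv A hA w hw.1, hInv A hA w hw.2⟩
        have hdisj : ∀ x ∈ U, x ∈ W' → x = 0 := by
          intro x hxU hxW'
          have := Submodule.orthogonal_disjoint U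
          rw [Submodule.disjoint_def] at this
          exact this x hxU hxW'.1
        have hdisj' : U ⊓ W' = ⊥ := by
          rw [eq_bot_iff]
          intro x hx
          rw [Submodule.mem_bot]
          exact hdisj x hx.1 hx.2
        have hsup : U ⊔ W' = W := by
          refine le_antisymm (sup_le hUW inf_le_right) ?_
          intro w hw
          have htop : U ⊔ Uᗮ = ⊤ := Submodule.sup_orthogonal_of_hasOrthogonalProjection
          have hw' : w ∈ U ⊔ Uᗮ := htop ▸ Submodule.mem_top
          obtain ⟨u, hu, x, hx, hux⟩ := Submodule.mem_sup.mp hw'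
          have hxW : x ∈ W := by
            have : x = w - u := by rw [← hux]; abel
            rw [this]
            exact sub_mem hw (hUW hu)
          exact Submodule.mem_sup.mpr ⟨u, hu, x, ⟨hx, hxW⟩, hux⟩
        -- rank count
        have hrank' : Module.finrank ℂ W' ≤ n := by
          have hcount := Submodule.finrank_sup_add_finrank_inf_eq U W'
          rw [hsup, hdisj'] at hcount
          have hUpos : 0 < Module.finrank ℂ U := by
            rcases Nat.eq_zero_or_pos (Module.finrank ℂ U) with h' | h'
            · exact absurd (Submodule.finrank_eq_zero.mp h') hUne
            · exact h'
          have hbotrank : Module.finrank ℂ (⊥ : Submodule ℂ V) = 0 := finrank_bot ℂ V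
          omega
        obtain ⟨r, f, hf, hsupf, hindep⟩ := ih W' hrank' hW'Gr hW'Inv
        refine ⟨r + 1, Fin.cons U f, ?_, ?_, ?_⟩
        · intro i
          refine Fin.cases ?_ ?_ i
          · rw [Fin.cons_zero]
            exact ⟨hUne, hUGr, hUInv, hUIrr⟩
          · intro j
            rw [Fin.cons_succ]
            exact hf j
        · have hsupcons : iSup (Fin.cons U f) = U ⊔ iSup f := by
            refine le_antisymm (iSup_le fun i => ?_) (sup_le ?_ (iSup_le fun j => ?_))
            · refine Fin.cases ?_ ?_ i
              · rw [Fin.cons_zero]; exact le_sup_left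
              · intro j
                rw [Fin.cons_succ]
                exact le_trans (le_iSup f j) le_sup_right
            · exact le_iSup (Fin.cons U f) 0
            · exact le_trans (le_of_eq (Fin.cons_succ (α := fun _ => Submodule ℂ V) U f j).symm)
                (le_iSup (Fin.cons U f) (Fin.succ j))
          rw [hsupcons, hsupf, hsup]
        · exact aux_indep_cons hindep (fun i => hsupf ▸ le_iSup f i) hdisj
  -- apply to the whole space
  obtain ⟨r, f, hf, hsupf, hindep⟩ :=
    main (Module.finrank ℂ (⊤ : Submodule ℂ V)) ⊤ le_rfl
      (fun v _ => Submodule.mem_top) (fun A _ w _ => Submodule.mem_top)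
  refine ⟨r, f, fun i => ?_, ?_⟩
  · obtain ⟨hne, hGr, hInv, hIrr⟩ := hf i
    refine ⟨hne, (hGrEquiv (f i)).mp hGr, hInv, ?_⟩
    intro U hle hUgr hUinv
    exact hIrr U hle ((hGrEquiv U).mpr hUgr) hUinv
  · exact DirectSum.isInternal_submodule_of_iSupIndep_of_iSup_eq_top hindep hsupf
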